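/- Let W_n ⊆ V_n be the K-submodule spanned by basis elements ((y1,...,yn),(x1,...,xn)) for which there is some i ∈ {1,...,n−1} with y_i = y_{i+1} and x_i = x_{i+1}. Then l_n(W_n) ⊆ W_{n−1} and r_n(W_n) ⊆ W_{n−1} for all n ≥ 1. -/
import Mathlib


namespace Stmt10

variable {X Y : Type*}

/-- The free `K`-module `V_n` on tuples in `Y^n × X^n`. -/
abbrev V (K : Type*) [CommRing K] (X Y : Type*) (n : ℕ) : Type _ :=
  ((Fin n → Y) × (Fin n → X)) →₀ K

/-- `λ_{n,i}` on generators: act on the entries before `i` by the `i`-th entry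
and delete the `i`-th entry. -/
def lamTup (qop : X → X → X) (hop : X → X → Y → Y → Y) {n : ℕ} (i : Fin (n + 1))
    (t : (Fin (n + 1) → Y) × (Fin (n + 1) → X)) : (Fin n → Y) × (Fin n → X) :=
  (fun j => if (j : ℕ) < (i : ℕ)
      then hop (t.2 j.castSucc) (t.2 i) (t.1 j.castSucc) (t.1 i)
      else t.1 j.succ,
   fun j => if (j : ℕ) < (i : ℕ) then qop (t.2 j.castSucc) (t.2 i) else t.2 j.succ)

/-- `ρ_{n,i}` on generators: delete the `i`-th entries of both tuples. -/
def rhoTup {n : ℕ} (i : Fin (n + 1))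
    (t : (Fin (n + 1) → Y) × (Fin (n + 1) → X)) : (Fin n → Y) × (Fin n → X) :=
  (fun j => t.1 (i.succAbove j), fun j => t.2 (i.succAbove j))

/-- The linear map `λ_{n,i} : V_{n+1} → V_n`. -/
noncomputable def lamMap (K : Type*) [CommRing K] (qop : X → X → X)
    (hop : X → X → Y → Y → Y) (n : ℕ) (i : Fin (n + 1)) :
    V K X Y (n + 1) →ₗ[K] V K X Y n :=
  Finsupp.lmapDomain K K (lamTup qop hop i)

/-- The linear map `ρ_{n,i} : V_{n+1} → V_n`. -/
noncomputable def rhoMap (K : Type*) [CommRing K] (n : ℕ) (i : Fin (n + 1)) :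
    V K X Y (n + 1) →ₗ[K] V K X Y n :=
  Finsupp.lmapDomain K K (rhoTup i)

/-- `l_n = Σ_i (-1)^{i+1} λ_{n,i}` (written with `0`-based indices). -/
noncomputable def lMap (K : Type*) [CommRing K] (qop : X → X → X)
    (hop : X → X → Y → Y → Y) (n : ℕ) : V K X Y (n + 1) →ₗ[K] V K X Y n :=
  ∑ i : Fin (n + 1), ((-1 : K) ^ (i : ℕ)) • lamMap K qop hop n i

/-- `r_n = Σ_i (-1)^{i+1} ρ_{n,i}` (written with `0`-based indices). -/
noncomputable def rMap (K : Type*) [CommRing K] (n : ℕ) :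
    V K X Y (n + 1) →ₗ[K] V K X Y n :=
  ∑ i : Fin (n + 1), ((-1 : K) ^ (i : ℕ)) • rhoMap (X := X) (Y := Y) K n i

/-- A tuple is degenerate if some two consecutive entries agree in both
the `Y`- and the `X`-component. -/
def Degenerate {n : ℕ} (t : (Fin n → Y) × (Fin n → X)) : Prop :=
  ∃ i j : Fin n, (i : ℕ) + 1 = (j : ℕ) ∧ t.1 i = t.1 j ∧ t.2 i = t.2 j

/-- The submodule `W_n ⊆ V_n` spanned by the degenerate generators. -/
noncomputable def W (K : Type*) [CommRing K] (X Y : Type*) (n : ℕ) :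
    Submodule K (V K X Y n) :=
  Submodule.span K
    {f | ∃ t : (Fin n → Y) × (Fin n → X), Degenerate t ∧ f = Finsupp.single t 1}

section Aux

variable {K : Type*} [CommRing K]

lemma sum_mem_W {n : ℕ} (g : Fin (n + 1) → (Fin n → Y) × (Fin n → X))
    (i j : Fin (n + 1)) (hij : (i : ℕ) + 1 = (j : ℕ))
    (hdeg : ∀ k, k ≠ i → k ≠ j → Degenerate (g k)) (heq : g i = g j) :
    (∑ k : Fin (n + 1), ((-1 : K) ^ (k : ℕ)) • Finsupp.single (g k) (1 : K)) ∈
      W K X Y n := by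
  classical
  have hne : i ≠ j := by
    intro h; rw [h] at hij; omega
  have hsub : ({i, j} : Finset (Fin (n + 1))) ⊆ Finset.univ := Finset.subset_univ _
  rw [← Finset.sum_sdiff hsub]
  refine Submodule.add_mem _ ?_ ?_
  · refine Submodule.sum_mem _ fun k hk => ?_
    simp only [Finset.mem_sdiff, Finset.mem_insert, Finset.mem_singleton] at hk
    refine Submodule.smul_mem _ _ (Submodule.subset_span ?_)
    exact ⟨g k, hdeg k (by tauto) (by tauto), rfl⟩
  · rw [Finset.sum_pair hne, heq, ← add_smul]
    have h0 : ((-1 : K) ^ (i : ℕ) + (-1 : K) ^ (j : ℕ)) = 0 := by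
      rw [← hij, pow_succ]; ring
    rw [h0, zero_smul]
    exact Submodule.zero_mem _

lemma lam_deg (qop : X → X → X) (hop : X → X → Y → Y → Y)
    {n : ℕ} {t : (Fin (n + 1) → Y) × (Fin (n + 1) → X)} {i j : Fin (n + 1)}
    (hij : (i : ℕ) + 1 = (j : ℕ)) (hy : t.1 i = t.1 j) (hx : t.2 i = t.2 j)
    {k : Fin (n + 1)} (hki : k ≠ i) (hkj : k ≠ j) :
    Degenerate (lamTup qop hop k t) := by
  have hki' : (k : ℕ) ≠ (i : ℕ) := fun h => hki (Fin.ext h)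
  have hkj' : (k : ℕ) ≠ (j : ℕ) := fun h => hkj (Fin.ext h)
  have hjn : (j : ℕ) ≤ n := by have := j.isLt; omega
  have hkn : (k : ℕ) ≤ n := by have := k.isLt; omega
  rcases lt_or_gt_of_ne hki' with hlt | hgt
  · -- k < i
    have hi1 : 1 ≤ (i : ℕ) := by omega
    have ha : (i : ℕ) - 1 < n := by omega
    have hb : (i : ℕ) < n := by omega
    refine ⟨⟨(i : ℕ) - 1, ha⟩, ⟨(i : ℕ), hb⟩, by show (i : ℕ) - 1 + 1 = (i : ℕ); omega,
      ?_, ?_⟩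
    · simp only [lamTup]
      rw [if_neg (by show ¬ ((i : ℕ) - 1 < (k : ℕ)); omega),
        if_neg (by show ¬ ((i : ℕ) < (k : ℕ)); omega)]
      have e1 : (⟨(i : ℕ) - 1, ha⟩ : Fin n).succ = i := Fin.ext (by simp; omega)
      have e2 : (⟨(i : ℕ), hb⟩ : Fin n).succ = j := Fin.ext (by simp; omega)
      rw [e1, e2, hy]
    · simp only [lamTup]
      rw [if_neg (by show ¬ ((i : ℕ) - 1 < (k : ℕ)); omega),
        if_neg (by show ¬ ((i : ℕ) < (k : ℕ)); omega)]
      have e1 : (⟨(i : ℕ) - 1, ha⟩ : Fin n).succ = i := Fin.ext (by simp; omega)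
      have e2 : (⟨(i : ℕ), hb⟩ : Fin n).succ = j := Fin.ext (by simp; omega)
      rw [e1, e2, hx]
  · -- k > i, hence k > j
    have hgt' : (j : ℕ) < (k : ℕ) := by omega
    have ha : (i : ℕ) < n := by omega
    have hb : (j : ℕ) < n := by omega
    refine ⟨⟨(i : ℕ), ha⟩, ⟨(j : ℕ), hb⟩, by show (i : ℕ) + 1 = (j : ℕ); omega, ?_, ?_⟩
    · simp only [lamTup]
      rw [if_pos (by show (i : ℕ) < (k : ℕ); omega),
        if_pos (by show (j : ℕ) < (k : ℕ); omega)]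
      have e1 : (⟨(i : ℕ), ha⟩ : Fin n).castSucc = i := Fin.ext rfl
      have e2 : (⟨(j : ℕ), hb⟩ : Fin n).castSucc = j := Fin.ext rfl
      rw [e1, e2, hy, hx]
    · simp only [lamTup]
      rw [if_pos (by show (i : ℕ) < (k : ℕ); omega),
        if_pos (by show (j : ℕ) < (k : ℕ); omega)]
      have e1 : (⟨(i : ℕ), ha⟩ : Fin n).castSucc = i := Fin.ext rfl
      have e2 : (⟨(j : ℕ), hb⟩ : Fin n).castSucc = j := Fin.ext rfl
      rw [e1, e2, hx]

lemma lam_eq (qop : X → X → X) (hop : X → X → Y → Y → Y)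
    (qidem : ∀ x, qop x x = x) (hidem : ∀ x y, hop x x y y = y)
    {n : ℕ} {t : (Fin (n + 1) → Y) × (Fin (n + 1) → X)} {i j : Fin (n + 1)}
    (hij : (i : ℕ) + 1 = (j : ℕ)) (hy : t.1 i = t.1 j) (hx : t.2 i = t.2 j) :
    lamTup qop hop i t = lamTup qop hop j t := by
  refine Prod.ext (funext fun m => ?_) (funext fun m => ?_)
  · simp only [lamTup]
    rcases lt_trichotomy (m : ℕ) (i : ℕ) with h | h | h
    · rw [if_pos h, if_pos (by omega), hy, hx]
    · rw [if_neg (by omega), if_pos (by omega)]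
      have e1 : m.castSucc = i := Fin.ext h
      have e2 : m.succ = j := Fin.ext (by simp [h, hij])
      rw [e1, e2, ← hy, ← hx, hidem]
    · rw [if_neg (by omega), if_neg (by omega)]
  · simp only [lamTup]
    rcases lt_trichotomy (m : ℕ) (i : ℕ) with h | h | h
    · rw [if_pos h, if_pos (by omega), hx]
    · rw [if_neg (by omega), if_pos (by omega)]
      have e1 : m.castSucc = i := Fin.ext h
      have e2 : m.succ = j := Fin.ext (by simp [h, hij])
      rw [e1, e2, ← hx, qidem]
    · rw [if_neg (by omega), if_neg (by omega)]

lemma succAbove_val {n : ℕ} (k : Fin (n + 1)) (m : Fin n) :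
    ((k.succAbove m : Fin (n + 1)) : ℕ) =
      if (m : ℕ) < (k : ℕ) then (m : ℕ) else (m : ℕ) + 1 := by
  rcases lt_or_ge (m : ℕ) (k : ℕ) with h | h
  · rw [Fin.succAbove_of_castSucc_lt _ _ (by simpa [Fin.lt_def] using h), if_pos h]
    rfl
  · rw [Fin.succAbove_of_le_castSucc _ _ (by simpa [Fin.le_def] using h),
      if_neg (by omega)]
    rfl

lemma rho_deg {n : ℕ} {t : (Fin (n + 1) → Y) × (Fin (n + 1) → X)} {i j : Fin (n + 1)}
    (hij : (i : ℕ) + 1 = (j : ℕ)) (hy : t.1 i = t.1 j) (hx : t.2 i = t.2 j)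
    {k : Fin (n + 1)} (hki : k ≠ i) (hkj : k ≠ j) :
    Degenerate (rhoTup k t) := by
  have hki' : (k : ℕ) ≠ (i : ℕ) := fun h => hki (Fin.ext h)
  have hkj' : (k : ℕ) ≠ (j : ℕ) := fun h => hkj (Fin.ext h)
  have hjn : (j : ℕ) ≤ n := by have := j.isLt; omega
  have hkn : (k : ℕ) ≤ n := by have := k.isLt; omega
  rcases lt_or_gt_of_ne hki' with hlt | hgt
  · have ha : (i : ℕ) - 1 < n := by omega
    have hb : (i : ℕ) < n := by omega
    have e1 : k.succAbove ⟨(i : ℕ) - 1, ha⟩ = i := by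
      refine Fin.ext ?_
      rw [succAbove_val]
      show (if (i : ℕ) - 1 < (k : ℕ) then (i : ℕ) - 1 else (i : ℕ) - 1 + 1) = (i : ℕ)
      rw [if_neg (by omega)]; omega
    have e2 : k.succAbove ⟨(i : ℕ), hb⟩ = j := by
      refine Fin.ext ?_
      rw [succAbove_val]
      show (if (i : ℕ) < (k : ℕ) then (i : ℕ) else (i : ℕ) + 1) = (j : ℕ)
      rw [if_neg (by omega)]; omega
    exact ⟨⟨(i : ℕ) - 1, ha⟩, ⟨(i : ℕ), hb⟩, by show (i : ℕ) - 1 + 1 = (i : ℕ); omega,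
      by simp only [rhoTup]; rw [e1, e2, hy],
      by simp only [rhoTup]; rw [e1, e2, hx]⟩
  · have hgt' : (j : ℕ) < (k : ℕ) := by omega
    have ha : (i : ℕ) < n := by omega
    have hb : (j : ℕ) < n := by omega
    have e1 : k.succAbove ⟨(i : ℕ), ha⟩ = i := by
      refine Fin.ext ?_
      rw [succAbove_val]
      show (if (i : ℕ) < (k : ℕ) then (i : ℕ) else (i : ℕ) + 1) = (i : ℕ)
      rw [if_pos (by omega)]
    have e2 : k.succAbove ⟨(j : ℕ), hb⟩ = j := by
      refine Fin.ext ?_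
      rw [succAbove_val]
      show (if (j : ℕ) < (k : ℕ) then (j : ℕ) else (j : ℕ) + 1) = (j : ℕ)
      rw [if_pos (by omega)]
    exact ⟨⟨(i : ℕ), ha⟩, ⟨(j : ℕ), hb⟩, by show (i : ℕ) + 1 = (j : ℕ); omega,
      by simp only [rhoTup]; rw [e1, e2, hy],
      by simp only [rhoTup]; rw [e1, e2, hx]⟩

lemma rho_eq {n : ℕ} {t : (Fin (n + 1) → Y) × (Fin (n + 1) → X)} {i j : Fin (n + 1)}
    (hij : (i : ℕ) + 1 = (j : ℕ)) (hy : t.1 i = t.1 j) (hx : t.2 i = t.2 j) :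
    rhoTup i t = rhoTup (X := X) (Y := Y) j t := by
  have key : ∀ m : Fin n,
      t.1 (i.succAbove m) = t.1 (j.succAbove m) ∧
      t.2 (i.succAbove m) = t.2 (j.succAbove m) := by
    intro m
    rcases lt_trichotomy (m : ℕ) (i : ℕ) with h | h | h
    · have e : i.succAbove m = j.succAbove m := by
        refine Fin.ext ?_
        rw [succAbove_val, succAbove_val, if_pos h, if_pos (by omega)]
      rw [e]; exact ⟨rfl, rfl⟩
    · have e1 : i.succAbove m = j := by
        refine Fin.ext ?_
        rw [succAbove_val, if_neg (by omega)]; omega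
      have e2 : j.succAbove m = i := by
        refine Fin.ext ?_
        rw [succAbove_val, if_pos (by omega)]; omega
      rw [e1, e2]; exact ⟨hy.symm, hx.symm⟩
    · have e : i.succAbove m = j.succAbove m := by
        refine Fin.ext ?_
        rw [succAbove_val, succAbove_val, if_neg (by omega), if_neg (by omega)]
      rw [e]; exact ⟨rfl, rfl⟩
  refine Prod.ext (funext fun m => ?_) (funext fun m => ?_)
  · exact (key m).1
  · exact (key m).2

lemma lMap_single (qop : X → X → X) (hop : X → X → Y → Y → Y) (n : ℕ)
    (t : (Fin (n + 1) → Y) × (Fin (n + 1) → X)) :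
    lMap K qop hop n (Finsupp.single t 1) =
      ∑ k : Fin (n + 1), ((-1 : K) ^ (k : ℕ)) •
        Finsupp.single (lamTup qop hop k t) (1 : K) := by
  simp [lMap, lamMap, LinearMap.sum_apply, Finsupp.lmapDomain_apply,
    Finsupp.mapDomain_single]

lemma rMap_single (n : ℕ) (t : (Fin (n + 1) → Y) × (Fin (n + 1) → X)) :
    rMap (X := X) (Y := Y) K n (Finsupp.single t 1) =
      ∑ k : Fin (n + 1), ((-1 : K) ^ (k : ℕ)) •
        Finsupp.single (rhoTup k t) (1 : K) := by
  simp [rMap, rhoMap, LinearMap.sum_apply, Finsupp.lmapDomain_apply,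
    Finsupp.mapDomain_single]

end Aux

/-- `l_n(W_n) ⊆ W_{n−1}` and `r_n(W_n) ⊆ W_{n−1}` for `n ≥ 1`. -/
theorem degenerate_submodule_stable (K : Type*) [CommRing K] (qop : X → X → X) (hop : X → X → Y → Y → Y)
    (qidem : ∀ x, qop x x = x)
    (qbij : ∀ a, Function.Bijective fun x => qop x a)
    (qdistrib : ∀ x1 x2 x3, qop (qop x1 x2) x3 = qop (qop x1 x3) (qop x2 x3))
    (hidem : ∀ x y, hop x x y y = y)
    (hbij : ∀ x1 x2 (a : Y), Function.Bijective fun y => hop x1 x2 y a)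
    (hdistrib : ∀ x1 x2 x3 (y1 y2 y3 : Y),
      hop (qop x1 x2) x3 (hop x1 x2 y1 y2) y3 =
        hop (qop x1 x3) (qop x2 x3) (hop x1 x3 y1 y3) (hop x2 x3 y2 y3))
    (n : ℕ) :
    Submodule.map (lMap K qop hop n) (W K X Y (n + 1)) ≤ W K X Y n ∧
    Submodule.map (rMap (X := X) (Y := Y) K n) (W K X Y (n + 1)) ≤ W K X Y n := by
  constructor
  · rw [Submodule.map_le_iff_le_comap, W, Submodule.span_le]
    rintro f ⟨t, ⟨i, j, hij, hy, hx⟩, rfl⟩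
    simp only [SetLike.mem_coe, Submodule.mem_comap]
    rw [lMap_single]
    exact sum_mem_W _ i j hij (fun k hki hkj => lam_deg qop hop hij hy hx hki hkj)
      (lam_eq qop hop qidem hidem hij hy hx)
  · rw [Submodule.map_le_iff_le_comap, W, Submodule.span_le]
    rintro f ⟨t, ⟨i, j, hij, hy, hx⟩, rfl⟩
    simp only [SetLike.mem_coe, Submodule.mem_comap]
    rw [rMap_single]
    exact sum_mem_W _ i j hij (fun k hki hkj => rho_deg hij hy hx hki hkj)
      (rho_eq hij hy hx)

end Stmt10
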